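/- arXiv:1705.04014 — 2 statements merged into one kernel-verified Lean document; each statement's English description precedes it below -/
import Mathlib

section
/- For all x > 0, the exponential integral satisfies the bound E₁(x) ≤ e^{-x} · log(1 + 1/x). -/
open MeasureTheory Real Set Filter

noncomputable def expIntegralE1 (x : ℝ) : ℝ := ∫ t in Set.Ioi x, Real.exp (-t) / t

lemma aux_deriv (t : ℝ) (ht : 0 < t) :
    HasDerivAt (fun s => -(Real.exp (-s) * Real.log (1 + 1 / s)))
      (Real.exp (-t) * (Real.log (1 + 1 / t) + 1 / (t * (t + 1)))) t := by
  have ht1 : (0:ℝ) < 1 + 1 / t := by positivity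
  have h1 : HasDerivAt (fun s : ℝ => Real.exp (-s)) (-Real.exp (-t)) t := by
    simpa [Function.comp_def] using (Real.hasDerivAt_exp (-t)).comp t (hasDerivAt_neg t)
  have h2 : HasDerivAt (fun s : ℝ => 1 + 1 / s) (-(1 / t ^ 2)) t := by
    simpa [one_div] using (hasDerivAt_inv ht.ne').const_add 1
  have h3 : HasDerivAt (fun s : ℝ => Real.log (1 + 1 / s))
      ((-(1 / t ^ 2)) / (1 + 1 / t)) t := h2.log ht1.ne'
  have h4 : HasDerivAt (fun s => -(Real.exp (-s) * Real.log (1 + 1 / s))) _ t := (h1.mul h3).neg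
  convert h4 using 1
  field_simp
  ring

lemma log_lb (t : ℝ) (ht : 0 < t) : 1 / (t + 1) ≤ Real.log (1 + 1 / t) := by
  have h : Real.log (t / (t + 1)) ≤ t / (t + 1) - 1 :=
    Real.log_le_sub_one_of_pos (by positivity)
  have e1 : (1 : ℝ) + 1 / t = ((t : ℝ) / (t + 1))⁻¹ := by field_simp
  rw [e1, Real.log_inv]
  have : t / (t + 1) - 1 = -(1 / (t + 1)) := by field_simp; ring
  linarith [h, this ▸ h]

/-- For `x > 0`, `E₁(x) ≤ e^{-x} · log(1 + 1/x)`. -/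
theorem E1_le_exp_neg_mul_log (x : ℝ) (hx : 0 < x) :
    expIntegralE1 x ≤ Real.exp (-x) * Real.log (1 + 1 / x) := by
  set F' : ℝ → ℝ := fun t => Real.exp (-t) * (Real.log (1 + 1 / t) + 1 / (t * (t + 1))) with hF'
  have hexp : IntegrableOn (fun t => Real.exp (-t)) (Ioi x) := by
    simpa using exp_neg_integrableOn_Ioi x (b := 1) one_pos
  -- integrability of e^{-t}/t
  have hint1 : IntegrableOn (fun t => Real.exp (-t) / t) (Ioi x) := by
    apply (hexp.const_mul (1 / x)).mono
    · exact (((continuous_neg.rexp).continuousOn).div continuousOn_id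
        (fun t ht => (hx.trans ht).ne')).aestronglyMeasurable measurableSet_Ioi
    · filter_upwards [ae_restrict_mem measurableSet_Ioi] with t ht
      have htp : 0 < t := hx.trans ht
      rw [Real.norm_eq_abs, Real.norm_eq_abs, abs_of_nonneg (by positivity),
        abs_of_nonneg (by positivity)]
      calc Real.exp (-t) / t ≤ Real.exp (-t) / x := by gcongr; exact le_of_lt ht
        _ = 1 / x * Real.exp (-t) := by ring
  -- integrability of F'
  have hC : ∀ t ∈ Ioi x, 0 ≤ Real.log (1 + 1 / t) + 1 / (t * (t + 1)) ∧
      Real.log (1 + 1 / t) + 1 / (t * (t + 1)) ≤ Real.log (1 + 1 / x) + 1 / (x * (x + 1)) := by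
    intro t ht
    have htp : 0 < t := hx.trans ht
    constructor
    · have := Real.log_nonneg (by nlinarith [one_div_pos.2 htp] : (1:ℝ) ≤ 1 + 1 / t)
      positivity
    · have h1 : Real.log (1 + 1 / t) ≤ Real.log (1 + 1 / x) := by
        apply Real.log_le_log (by positivity)
        have := one_div_le_one_div_of_le hx (le_of_lt ht)
        linarith
      have hxt : x < t := ht
      have h2 : 1 / (t * (t + 1)) ≤ 1 / (x * (x + 1)) := by
        apply one_div_le_one_div_of_le (by positivity)
        nlinarith [mul_pos (sub_pos.2 hxt) (by linarith : (0:ℝ) < t + x + 1)]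
      linarith
  have hint2 : IntegrableOn F' (Ioi x) := by
    apply (hexp.const_mul (Real.log (1 + 1 / x) + 1 / (x * (x + 1)))).mono
    · apply ContinuousOn.aestronglyMeasurable _ measurableSet_Ioi
      apply ((continuous_neg.rexp).continuousOn).mul
      apply ContinuousOn.add
      · exact (continuousOn_const.add ((continuousOn_const.div continuousOn_id
          (fun t ht => (hx.trans ht).ne')))).log
          (fun t ht => by have h : (0:ℝ) < t := hx.trans ht; (try simp only [Pi.add_apply, Pi.div_apply, Pi.one_apply, id_eq]); positivity)
      · exact continuousOn_const.div (continuousOn_id.mul (continuousOn_id.add continuousOn_const))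
          (fun t ht => by have h : (0:ℝ) < t := hx.trans ht; positivity)
    · filter_upwards [ae_restrict_mem measurableSet_Ioi] with t ht
      obtain ⟨h0, h1⟩ := hC t ht
      rw [Real.norm_eq_abs, Real.norm_eq_abs, hF']
      have he : 0 < Real.exp (-t) := Real.exp_pos _
      have hCx : 0 ≤ Real.log (1 + 1 / x) := Real.log_nonneg (by nlinarith [one_div_pos.2 hx])
      rw [abs_of_nonneg (by positivity), abs_of_nonneg (mul_nonneg (add_nonneg hCx (by positivity)) he.le)]
      show Real.exp (-t) * _ ≤ _ * Real.exp (-t)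
      rw [mul_comm (Real.exp (-t))]
      exact mul_le_mul_of_nonneg_right h1 he.le
  -- FTC
  have hftc : ∫ t in Ioi x, F' t =
      0 - -(Real.exp (-x) * Real.log (1 + 1 / x)) := by
    apply integral_Ioi_of_hasDerivAt_of_tendsto
    · exact (aux_deriv x hx).continuousAt.continuousWithinAt
    · exact fun t ht => aux_deriv t (hx.trans ht)
    · exact hint2
    · have h1 : Tendsto (fun t : ℝ => Real.exp (-t)) atTop (nhds 0) :=
        Real.tendsto_exp_atBot.comp tendsto_neg_atTop_atBot
      have h2 : Tendsto (fun t : ℝ => Real.log (1 + 1 / t)) atTop (nhds 0) := by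
        have ha : Tendsto (fun t : ℝ => 1 + 1 / t) atTop (nhds 1) := by
          simpa using tendsto_const_nhds.add (tendsto_inv_atTop_zero (𝕜 := ℝ))
        have hb := (Real.continuousAt_log (by norm_num : (1:ℝ) ≠ 0)).tendsto.comp ha
        simpa [Function.comp_def] using hb
      have := (h1.mul h2).neg
      simpa using this
  -- compare
  have hmono : expIntegralE1 x ≤ ∫ t in Ioi x, F' t := by
    apply setIntegral_mono_on hint1 hint2 measurableSet_Ioi
    intro t ht
    have htp : 0 < t := hx.trans ht
    have hlb := log_lb t htp
    have he : 0 < Real.exp (-t) := Real.exp_pos _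
    have key : 1 / t ≤ Real.log (1 + 1 / t) + 1 / (t * (t + 1)) := by
      have : 1 / t - 1 / (t * (t + 1)) = 1 / (t + 1) := by
        field_simp
        ring
      linarith
    calc Real.exp (-t) / t = Real.exp (-t) * (1 / t) := by ring
      _ ≤ F' t := mul_le_mul_of_nonneg_left key he.le
  rw [hftc] at hmono
  linarith
end

section
/- Let b, γ > 0 and R_B > 0 with R̄_B = R_B·log 2, and suppose (R̄_B/(bγ))·e^{R̄_B(1 − 1/(bγ))} ≤ 1/e. Then α = (−(1/R̄_B)W(−(R̄_B/(bγ))e^{R̄_B(1−1/(bγ))}) − 1/(bγ)) / (1 − (1/R̄_B)W(−(R̄_B/(bγ))e^{R̄_B(1−1/(bγ))}) − 1/(bγ)) satisfies the equation (1−α)·log₂(1 + (α/(1−α))·bγ) = R_B, where W is a branch of the Lambert W function. -/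
open Real

/-- Closed-form solution of the time-splitting parameter under zero forcing:
if `w = W(−(R̄_B/(bγ))e^{R̄_B(1−1/(bγ))})` for a Lambert-W branch `W`
(i.e. `w·e^w` equals that argument), then
`α = (−w/R̄_B − 1/(bγ))/(1 − w/R̄_B − 1/(bγ))` satisfies
`(1−α)·log₂(1 + (α/(1−α))·bγ) = R_B`. -/
theorem ts_parameter_closed_form (b γ RB : ℝ) (hb : 0 < b) (hγ : 0 < γ)
    (hRB : 0 < RB)
    (RBbar : ℝ) (hRBbar : RBbar = RB * Real.log 2)
    (hfeas : RBbar / (b * γ) * Real.exp (RBbar * (1 - 1 / (b * γ)))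
        ≤ 1 / Real.exp 1)
    (w : ℝ)
    (hw : w * Real.exp w = -(RBbar / (b * γ)) * Real.exp (RBbar * (1 - 1 / (b * γ))))
    (α : ℝ)
    (hα : α = (-(1 / RBbar) * w - 1 / (b * γ)) /
        (1 - (1 / RBbar) * w - 1 / (b * γ))) :
    (1 - α) * Real.logb 2 (1 + α / (1 - α) * (b * γ)) = RB := by
  have hlog2 : (0:ℝ) < Real.log 2 := Real.log_pos (by norm_num)
  have hRbar : 0 < RBbar := by rw [hRBbar]; positivity
  set g : ℝ := b * γ with hgdef
  have hg : 0 < g := mul_pos hb hγ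
  set u : ℝ := -(1 / RBbar) * w - 1 / g with hu
  have hwu : w = -(RBbar * u) - RBbar / g := by
    rw [hu]; field_simp; ring
  -- step 1 : rewrite the Lambert equation in terms of u
  have h2 : (-(RBbar * u) - RBbar / g) * Real.exp (-(RBbar * u) - RBbar / g)
      = -(RBbar / g) * Real.exp (RBbar * (1 - 1 / g)) := by
    rw [← hwu]; exact hw
  -- step 2 : cancel the common factor exp(-RBbar/g)
  have h3 : (-(RBbar * u) - RBbar / g) * Real.exp (-(RBbar * u))
      = -(RBbar / g) * Real.exp RBbar := by
    have e1 : Real.exp (-(RBbar * u) - RBbar / g)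
        = Real.exp (-(RBbar * u)) * Real.exp (-(RBbar / g)) := by
      rw [sub_eq_add_neg, Real.exp_add]
    have e2 : Real.exp (RBbar * (1 - 1 / g))
        = Real.exp RBbar * Real.exp (-(RBbar / g)) := by
      have h' : RBbar * (1 - 1 / g) = RBbar + -(RBbar / g) := by ring
      rw [h', Real.exp_add]
    rw [e1, e2] at h2
    have he := Real.exp_ne_zero (-(RBbar / g))
    exact mul_right_cancel₀ he (by linear_combination h2)
  -- step 3 : key identity 1 + g u = exp (RBbar (u+1))
  have key : 1 + g * u = Real.exp (RBbar * (u + 1)) := by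
    have h4 : RBbar * ((1 + g * u) * Real.exp (-(RBbar * u)))
        = RBbar * Real.exp RBbar := by
      field_simp at h3
      linear_combination (-RBbar) * h3
    have h5 : (1 + g * u) * Real.exp (-(RBbar * u)) = Real.exp RBbar :=
      mul_left_cancel₀ (ne_of_gt hRbar) h4
    calc 1 + g * u
        = (1 + g * u) * (Real.exp (-(RBbar * u)) * Real.exp (RBbar * u)) := by
          rw [← Real.exp_add]; simp
      _ = Real.exp RBbar * Real.exp (RBbar * u) := by rw [← mul_assoc, h5]
      _ = Real.exp (RBbar * (u + 1)) := by rw [← Real.exp_add]; ring_nf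
  -- the denominator is nonzero
  have hu1 : u + 1 ≠ 0 := by
    intro h
    have hu' : u = -1 := by linarith
    rw [hu'] at key
    norm_num at key
    linarith
  -- simplify α
  have hden : 1 - 1 / RBbar * w - 1 / g = u + 1 := by rw [hu]; ring
  have hαu : α = u / (u + 1) := by rw [hα, hden]
  have h1α : 1 - α = 1 / (u + 1) := by rw [hαu]; field_simp; ring
  have hfrac : α / (1 - α) = u := by rw [h1α, hαu]; field_simp
  rw [hfrac, h1α]
  have harg : 1 + u * g = Real.exp (RBbar * (u + 1)) := by rw [← key]; ring
  rw [harg, Real.logb, Real.log_exp, hRBbar]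
  field_simp
end
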